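/- Let 𝒞 denote the Cantor set (as an index set of cardinality continuum). The unit sphere S = {y ∈ ℓ_∞(𝒞) : ‖y‖_∞ = 1} of ℓ_∞(𝒞) is separable in the weak* topology σ(ℓ_∞(𝒞), ℓ₁(𝒞)): there exists a countable set D ⊆ S such that for every y ∈ S, every finitely many x₁,…,x_k ∈ ℓ₁(𝒞) and every ε > 0, there exists w ∈ D with |∑_{t∈𝒞} (w(t) − y(t)) x_i(t)| < ε for all i = 1,…,k. -/

import Mathlib

open TopologicalSpace Filter Set

/-- A family `N` of subsets of a topological space `X` is a *k-network* if whenever `K ⊆ U`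
with `K` compact and `U` open, there is a finite subfamily `F ⊆ N` with `K ⊆ ⋃₀ F ⊆ U`. -/
def IsKNetwork {X : Type*} [TopologicalSpace X] (N : Set (Set X)) : Prop :=
  ∀ K U : Set X, IsCompact K → IsOpen U → K ⊆ U →
    ∃ F : Set (Set X), F ⊆ N ∧ F.Finite ∧ K ⊆ ⋃₀ F ∧ ⋃₀ F ⊆ U

/-- A family `N` of subsets of `X` is a *network* if for every `x` and every open `U ∋ x`
there is `A ∈ N` with `x ∈ A ⊆ U`. -/
def IsNetwork {X : Type*} [TopologicalSpace X] (N : Set (Set X)) : Prop :=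
  ∀ (x : X) (U : Set X), IsOpen U → x ∈ U → ∃ A ∈ N, x ∈ A ∧ A ⊆ U

/-- A family of subsets is *locally finite* if every point has a neighbourhood meeting
only finitely many of its members. -/
def IsLocallyFiniteFamily {X : Type*} [TopologicalSpace X] (N : Set (Set X)) : Prop :=
  ∀ x : X, ∃ V ∈ nhds x, {A ∈ N | (A ∩ V).Nonempty}.Finite

/-- A family of subsets is *σ-locally finite* if it is a countable union of locally finite
families. -/
def IsSigmaLocallyFinite {X : Type*} [TopologicalSpace X] (N : Set (Set X)) : Prop :=
  ∃ f : ℕ → Set (Set X), (∀ n, IsLocallyFiniteFamily (f n)) ∧ N = ⋃ n, f n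

/-- An *ℵ-space* is a regular Hausdorff space with a σ-locally finite k-network. -/
def IsAlephSpace (X : Type*) [TopologicalSpace X] : Prop :=
  RegularSpace X ∧ T2Space X ∧ ∃ N : Set (Set X), IsSigmaLocallyFinite N ∧ IsKNetwork N

/-- An *ℵ₀-space* is a regular Hausdorff space with a countable k-network. -/
def IsAleph0Space (X : Type*) [TopologicalSpace X] : Prop :=
  RegularSpace X ∧ T2Space X ∧ ∃ N : Set (Set X), N.Countable ∧ IsKNetwork N

noncomputable section AuxCl

private def clampR (r : ℝ) : ℝ := max (-1) (min 1 r)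

private lemma abs_clampR_le (r : ℝ) : |clampR r| ≤ 1 := by
  rw [abs_le]
  exact ⟨le_max_left _ _, max_le (by norm_num) (min_le_left _ _)⟩

private lemma clampR_of_one_le {r : ℝ} (h : 1 ≤ r) : clampR r = 1 := by
  unfold clampR
  rw [min_eq_left h]
  exact max_eq_right (by norm_num)

private lemma abs_clampR_sub_le {a b : ℝ} (hb : |b| ≤ 1) : |clampR a - b| ≤ |a - b| := by
  rw [abs_le] at hb
  unfold clampR
  rcases le_total 1 a with h | h
  · rw [min_eq_left h, max_eq_right (by norm_num : (-1:ℝ) ≤ 1),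
      abs_of_nonneg (by linarith), abs_of_nonneg (by linarith)]
    linarith
  · rw [min_eq_right h]
    rcases le_total a (-1) with h2 | h2
    · rw [max_eq_left h2, abs_of_nonpos (by linarith), abs_of_nonpos (by linarith)]
      linarith
    · rw [max_eq_right h2]

private def PhiW (n : ℕ) (g : (Fin n → Bool) → ℚ) : lp (fun _ : ℕ → Bool => ℝ) ⊤ :=
  ⟨fun t => clampR (g (fun i => t i)), memℓp_infty ⟨1, by
    rintro r ⟨t, rfl⟩
    simpa [Real.norm_eq_abs] using abs_clampR_le ((g (fun i => t i) : ℝ))⟩⟩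

private lemma PhiW_apply (n : ℕ) (g : (Fin n → Bool) → ℚ) (t : ℕ → Bool) :
    (PhiW n g : ∀ _ : ℕ → Bool, ℝ) t = clampR (g (fun i => t i)) := rfl

private lemma norm_PhiW_eq_one {n : ℕ} {g : (Fin n → Bool) → ℚ} (v : Fin n → Bool)
    (hv : (1:ℚ) ≤ g v) : ‖PhiW n g‖ = 1 := by
  have hb : BddAbove (Set.range fun t : ℕ → Bool => ‖(PhiW n g : ∀ _ : ℕ → Bool, ℝ) t‖) :=
    (lp.memℓp (PhiW n g)).bddAbove
  rw [lp.norm_eq_ciSup]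
  apply le_antisymm
  · refine ciSup_le fun t => ?_
    rw [PhiW_apply, Real.norm_eq_abs]
    exact abs_clampR_le _
  · set t0 : ℕ → Bool := fun m => if h : m < n then v ⟨m, h⟩ else false with ht0
    have h1 : (fun i : Fin n => t0 i) = v := by
      funext i
      simp [ht0, i.isLt]
    have h2 : ‖(PhiW n g : ∀ _ : ℕ → Bool, ℝ) t0‖ = 1 := by
      rw [PhiW_apply, h1, clampR_of_one_le (by exact_mod_cast hv), Real.norm_eq_abs]
      norm_num
    calc (1:ℝ) = ‖(PhiW n g : ∀ _ : ℕ → Bool, ℝ) t0‖ := h2.symm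
      _ ≤ ⨆ t, ‖(PhiW n g : ∀ _ : ℕ → Bool, ℝ) t‖ := le_ciSup hb t0

/-- The unit sphere of `ℓ_∞(𝒞)`, where `𝒞` is the Cantor set, is separable in the
weak* topology `σ(ℓ_∞(𝒞), ℓ₁(𝒞))`. -/
theorem sphere_ellInfty_cantor_weakStar_separable :
    ∃ D : Set (lp (fun _ : ℕ → Bool => ℝ) ⊤), D.Countable ∧ (∀ w ∈ D, ‖w‖ = 1) ∧
      ∀ y : lp (fun _ : ℕ → Bool => ℝ) ⊤, ‖y‖ = 1 →
        ∀ (k : ℕ) (x : Fin k → lp (fun _ : ℕ → Bool => ℝ) 1) (ε : ℝ), 0 < ε →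
          ∃ w ∈ D, ∀ i : Fin k, |∑' t : ℕ → Bool, (w t - y t) * x i t| < ε := by
  classical
  refine ⟨(Set.range fun p : Σ n : ℕ, (Fin n → Bool) → ℚ => PhiW p.1 p.2) ∩ {w | ‖w‖ = 1},
    (Set.countable_range _).mono Set.inter_subset_left, fun w hw => hw.2, ?_⟩
  intro y hy k x ε hε
  have hxs : ∀ i : Fin k, Summable fun t : ℕ → Bool => |x i t| := by
    intro i
    have h0 : (0:ℝ) < (1 : ENNReal).toReal := by norm_num
    have := (lp.memℓp (x i)).summable h0
    simpa [Real.norm_eq_abs] using this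
  set h : (ℕ → Bool) → ℝ := fun t => ∑ i : Fin k, |x i t| with hh_def
  have hh : Summable h := summable_sum fun i _ => hxs i
  have hh0 : ∀ t, 0 ≤ h t := fun t => Finset.sum_nonneg fun i _ => abs_nonneg _
  set M : ℝ := ∑' t, h t with hM_def
  have hM0 : 0 ≤ M := tsum_nonneg hh0
  set δ : ℝ := ε / (4 * (M + 1)) with hδ_def
  have hδ : 0 < δ := by positivity
  obtain ⟨S, hS⟩ : ∃ S : Finset (ℕ → Bool), ∑' t : {t // t ∉ S}, h t < ε / 8 :=
    ((tendsto_order.1 (tendsto_tsum_compl_atTop_zero h)).2 _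
      (by positivity : (0:ℝ) < ε/8)).exists
  -- a resolution level n that separates points of S and leaves a free cylinder
  set d : (ℕ → Bool) → (ℕ → Bool) → ℕ :=
    fun s s' => if hss : ∃ m, s m ≠ s' m then Nat.find hss else 0 with hd_def
  set n : ℕ := (S.sup fun s => S.sup fun s' => d s s') + S.card + 1 with hn_def
  have hinj : ∀ s ∈ S, ∀ s' ∈ S, (fun i : Fin n => s i) = (fun i : Fin n => s' i) → s = s' := by
    intro s hs s' hs' hE
    by_contra hne
    obtain ⟨m, hm⟩ := Function.ne_iff.mp hne
    have hex : ∃ m, s m ≠ s' m := ⟨m, hm⟩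
    have hdn : d s s' < n := by
      have h1 : d s s' ≤ S.sup fun s1 => d s s1 := Finset.le_sup hs'
      have h2 : (S.sup fun s1 => d s s1) ≤ S.sup fun s0 => S.sup fun s1 => d s0 s1 :=
        Finset.le_sup (f := fun s0 => S.sup fun s1 => d s0 s1) hs
      refine lt_of_le_of_lt (h1.trans h2) ?_
      rw [hn_def]
      exact Nat.lt_succ_of_le (Nat.le_add_right _ _)
    have hval : s (d s s') ≠ s' (d s s') := by
      simp only [hd_def, dif_pos hex]
      exact Nat.find_spec hex
    exact hval (congrFun hE ⟨d s s', hdn⟩)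
  obtain ⟨v₀, hv₀⟩ : ∃ v : Fin n → Bool, ∀ s ∈ S, (fun i : Fin n => s i) ≠ v := by
    by_contra hcon
    push_neg at hcon
    have hsub : (Finset.univ : Finset (Fin n → Bool)) ⊆
        S.image fun s => fun i : Fin n => s i := by
      intro v _
      obtain ⟨s, hs, hsv⟩ := hcon v
      exact Finset.mem_image.mpr ⟨s, hs, hsv⟩
    have hcard := Finset.card_le_card hsub
    rw [Finset.card_univ] at hcard
    have h2 : Fintype.card (Fin n → Bool) = 2 ^ n := by simp
    have h3 : (S.image fun s => fun i : Fin n => s i).card ≤ S.card := Finset.card_image_le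
    have h4 : n < 2 ^ n := Nat.lt_two_pow_self
    have h5 : S.card < n := by
      rw [hn_def]
      exact Nat.lt_succ_of_le (Nat.le_add_left _ _)
    have hA : (2:ℕ) ^ n ≤ S.card := le_trans (h2 ▸ hcard) h3
    exact absurd (hA.trans_lt (h5.trans h4)) (lt_irrefl _)
  -- rational approximations
  have hqe : ∀ t : ℕ → Bool, ∃ q : ℚ, |y t - (q:ℝ)| < δ := fun t => exists_rat_near (y t) hδ
  choose q hq using hqe
  set g : (Fin n → Bool) → ℚ :=
    fun v => if hv : ∃ s ∈ S, (fun i : Fin n => s i) = v then q hv.choose else 1 with hg_def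
  set w : lp (fun _ : ℕ → Bool => ℝ) ⊤ := PhiW n g with hw_def
  have hwS : ∀ s ∈ S, (w : ∀ _ : ℕ → Bool, ℝ) s = clampR (q s) := by
    intro s hs
    have hv : ∃ s' ∈ S, (fun i : Fin n => s' i) = (fun i : Fin n => s i) := ⟨s, hs, rfl⟩
    have h1 : g (fun i : Fin n => s i) = q hv.choose := dif_pos hv
    have h2 := hv.choose_spec
    have h3 : hv.choose = s := hinj _ h2.1 _ hs h2.2
    rw [hw_def, PhiW_apply, h1, h3]
  have hgv₀ : g v₀ = 1 := by
    rw [hg_def]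
    refine dif_neg ?_
    rintro ⟨s, hs, hsv⟩
    exact hv₀ s hs hsv
  have hwnorm : ‖w‖ = 1 := norm_PhiW_eq_one v₀ (by rw [hgv₀])
  refine ⟨w, ⟨⟨⟨n, g⟩, rfl⟩, hwnorm⟩, ?_⟩
  intro i
  have hwb : ∀ t, |(w : ∀ _ : ℕ → Bool, ℝ) t| ≤ 1 := fun t => by
    rw [hw_def, PhiW_apply]; exact abs_clampR_le _
  have hyb : ∀ t, |y t| ≤ 1 := fun t => by
    have := lp.norm_apply_le_norm ENNReal.top_ne_zero y t
    rwa [hy, Real.norm_eq_abs] at this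
  set F : (ℕ → Bool) → ℝ := fun t => (w t - y t) * x i t with hF_def
  have hdiff : ∀ t, |w t - y t| ≤ 2 := fun t =>
    (abs_sub _ _).trans (by linarith [hwb t, hyb t])
  have hFb : ∀ t, |F t| ≤ 2 * |x i t| := by
    intro t
    rw [hF_def, abs_mul]
    exact mul_le_mul_of_nonneg_right (hdiff t) (abs_nonneg _)
  have hFs : Summable fun t => |F t| :=
    Summable.of_nonneg_of_le (fun t => abs_nonneg _) hFb ((hxs i).mul_left 2)
  have key : |∑' t, F t| ≤ ∑' t, |F t| := by
    simpa [Real.norm_eq_abs] using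
      norm_tsum_le_tsum_norm (f := F) (by simpa [Real.norm_eq_abs] using hFs)
  have hsplit : ∑' t, |F t| = (∑ s ∈ S, |F s|) + ∑' t : ↑((S : Set (ℕ → Bool))ᶜ), |F t| :=
    (Summable.sum_add_tsum_compl hFs).symm
  have hxM : ∀ t, |x i t| ≤ h t := fun t =>
    Finset.single_le_sum (f := fun j : Fin k => |x j t|) (fun j _ => abs_nonneg _)
      (Finset.mem_univ i)
  have h1 : (∑ s ∈ S, |F s|) ≤ δ * M := by
    calc ∑ s ∈ S, |F s| ≤ ∑ s ∈ S, δ * |x i s| := by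
          refine Finset.sum_le_sum fun s hs => ?_
          rw [hF_def, abs_mul]
          refine mul_le_mul_of_nonneg_right ?_ (abs_nonneg _)
          rw [hwS s hs]
          refine (abs_clampR_sub_le (hyb s)).trans ?_
          rw [abs_sub_comm]
          exact (hq s).le
      _ = δ * ∑ s ∈ S, |x i s| := by rw [Finset.mul_sum]
      _ ≤ δ * M := by
          refine mul_le_mul_of_nonneg_left ?_ hδ.le
          calc ∑ s ∈ S, |x i s| ≤ ∑' t, |x i t| :=
                Summable.sum_le_tsum S (fun t _ => abs_nonneg _) (hxs i)
            _ ≤ M := Summable.tsum_le_tsum hxM (hxs i) hh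
  have h2 : ∑' t : ↑((S : Set (ℕ → Bool))ᶜ), |F t| ≤ 2 * (ε / 8) := by
    have hb : ∀ t : ↑((S : Set (ℕ → Bool))ᶜ), |F (t : ℕ → Bool)| ≤ 2 * h (t : ℕ → Bool) := by
      intro t
      rw [hF_def, abs_mul]
      exact mul_le_mul (hdiff _) (hxM _) (abs_nonneg _) (by norm_num)
    calc ∑' t : ↑((S : Set (ℕ → Bool))ᶜ), |F (t : ℕ → Bool)|
        ≤ ∑' t : ↑((S : Set (ℕ → Bool))ᶜ), 2 * h (t : ℕ → Bool) :=
          Summable.tsum_le_tsum hb (hFs.subtype _) ((hh.mul_left 2).subtype _)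
      _ = 2 * ∑' t : ↑((S : Set (ℕ → Bool))ᶜ), h (t : ℕ → Bool) := tsum_mul_left
      _ ≤ 2 * (ε / 8) := by
          refine mul_le_mul_of_nonneg_left ?_ (by norm_num)
          exact le_of_lt hS
  have hδM : δ * M ≤ ε / 4 := by
    rw [hδ_def, div_mul_eq_mul_div, div_le_div_iff₀ (by positivity) (by norm_num : (0:ℝ) < 4)]
    nlinarith
  have hfinal : |∑' t, F t| ≤ ε / 4 + 2 * (ε / 8) := by
    rw [hsplit] at key
    linarith
  calc |∑' t, ((w : ∀ _ : ℕ → Bool, ℝ) t - y t) * x i t| = |∑' t, F t| := by rw [hF_def]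
    _ ≤ ε / 4 + 2 * (ε / 8) := hfinal
    _ < ε := by linarith
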